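/- arXiv:2008.04587 — 3 statements merged into one kernel-verified Lean document; each statement's English description precedes it below -/
import Mathlib

section
/- If A and B are critical independent sets of a graph G, then A ∪ (B − N[A]) and B ∪ (A − N[B]) are critical independent sets of G of equal cardinality. -/
open Finset

variable {V : Type*}

namespace CrownPaper

variable [Fintype V] [DecidableEq V]

/-- The (open) neighborhood of a finite set of vertices. -/
def nbrs (G : SimpleGraph V) [DecidableRel G.Adj] (A : Finset V) : Finset V :=
  univ.filter (fun v => ∃ a ∈ A, G.Adj v a)

/-- The closed neighborhood `N[A] = A ∪ N(A)`. -/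
def closedNbrs (G : SimpleGraph V) [DecidableRel G.Adj] (A : Finset V) : Finset V :=
  A ∪ nbrs G A

/-- `S` is an independent set of `G`. -/
def IsIndep (G : SimpleGraph V) (S : Finset V) : Prop :=
  ∀ a ∈ S, ∀ b ∈ S, ¬ G.Adj a b

/-- The difference `d(S) = |S| - |N(S)|`. -/
def diff (G : SimpleGraph V) [DecidableRel G.Adj] (S : Finset V) : ℤ :=
  (S.card : ℤ) - ((nbrs G S).card : ℤ)

/-- `S` is a critical independent set. -/
def IsCritIndep (G : SimpleGraph V) [DecidableRel G.Adj] (S : Finset V) : Prop :=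
  IsIndep G S ∧ ∀ I : Finset V, IsIndep G I → diff G I ≤ diff G S

/-- `S` is a crown: an independent set with a matching from `N(S)` into `S`. -/
def IsCrown (G : SimpleGraph V) [DecidableRel G.Adj] (S : Finset V) : Prop :=
  IsIndep G S ∧ ∃ f : V → V, (∀ v ∈ nbrs G S, f v ∈ S ∧ G.Adj v (f v)) ∧
    Set.InjOn f (nbrs G S : Set V)

/-- `S` is a local maximum independent set: a maximum independent set of `G[N[S]]`. -/
def IsLocalMaxIndep (G : SimpleGraph V) [DecidableRel G.Adj] (S : Finset V) : Prop :=
  IsIndep G S ∧ ∀ I : Finset V, IsIndep G I → I ⊆ closedNbrs G S → I.card ≤ S.card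

/-- The independence number. -/
noncomputable def alpha (G : SimpleGraph V) : ℕ :=
  sSup {n | ∃ S : Finset V, IsIndep G S ∧ S.card = n}

/-- `M` is a matching of `G`, given as a finite set of (ordered) edges. -/
def IsMatching (G : SimpleGraph V) (M : Finset (V × V)) : Prop :=
  (∀ e ∈ M, G.Adj e.1 e.2) ∧
  ∀ e ∈ M, ∀ e' ∈ M, e ≠ e' →
    e.1 ≠ e'.1 ∧ e.1 ≠ e'.2 ∧ e.2 ≠ e'.1 ∧ e.2 ≠ e'.2

/-- The matching number. -/
noncomputable def mu (G : SimpleGraph V) : ℕ :=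
  sSup {n | ∃ M : Finset (V × V), IsMatching G M ∧ M.card = n}

/-- `G` has a perfect matching. -/
def HasPerfectMatching (G : SimpleGraph V) : Prop :=
  ∃ M : Finset (V × V), IsMatching G M ∧ ∀ v : V, ∃ e ∈ M, v = e.1 ∨ v = e.2

/-- `G` is a König–Egerváry graph: `α(G) + μ(G) = |V(G)|`. -/
def IsKonigEgervary (G : SimpleGraph V) : Prop :=
  alpha G + mu G = Fintype.card V

/-- `G` is bipartite. -/
def IsBipartite (G : SimpleGraph V) : Prop :=
  ∃ X : Set V, ∀ a b : V, G.Adj a b → (a ∈ X ↔ b ∉ X)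

end CrownPaper

open CrownPaper

set_option linter.unusedSectionVars false

section Aux

variable [Fintype V] [DecidableEq V] {G : SimpleGraph V} [DecidableRel G.Adj]

lemma mem_nbrs {A : Finset V} {v : V} : v ∈ nbrs G A ↔ ∃ a ∈ A, G.Adj v a := by
  simp [nbrs]

lemma nbrs_mono {A B : Finset V} (h : A ⊆ B) : nbrs G A ⊆ nbrs G B := by
  intro v hv
  rw [mem_nbrs] at hv ⊢
  obtain ⟨a, ha, hadj⟩ := hv
  exact ⟨a, h ha, hadj⟩

lemma nbrs_union (A B : Finset V) : nbrs G (A ∪ B) = nbrs G A ∪ nbrs G B := by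
  ext v
  simp only [mem_nbrs, Finset.mem_union]
  aesop

lemma indep_subset {A B : Finset V} (h : A ⊆ B) (hB : IsIndep G B) : IsIndep G A :=
  fun a ha b hb => hB a (h ha) b (h hb)

lemma indep_not_mem_nbrs {A : Finset V} (hA : IsIndep G A) {v : V} (hv : v ∈ A) :
    v ∉ nbrs G A := by
  rw [mem_nbrs]
  rintro ⟨a, ha, hadj⟩
  exact hA v hv a ha hadj

lemma crit_matching {A : Finset V} (hA : IsCritIndep G A) :
    ∃ f : V → V, (∀ v ∈ nbrs G A, f v ∈ A ∧ G.Adj v (f v)) ∧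
      Set.InjOn f (nbrs G A : Set V) := by
  classical
  set t : V → Finset V :=
    fun v => if v ∈ nbrs G A then A.filter (fun a => G.Adj v a) else univ with ht
  have hall : ∀ s : Finset V, s.card ≤ (s.biUnion t).card := by
    intro s
    by_cases hs : s ⊆ nbrs G A
    · set T := s.biUnion t with hT
      have hTA : T ⊆ A := by
        intro a haT
        simp only [hT, Finset.mem_biUnion] at haT
        obtain ⟨v, hvs, hvt⟩ := haT
        rw [ht] at hvt
        simp only [if_pos (hs hvs), Finset.mem_filter] at hvt
        exact hvt.1
      have hIind : IsIndep G (A \ T) := indep_subset Finset.sdiff_subset hA.1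
      have hle := hA.2 (A \ T) hIind
      have hNI : nbrs G (A \ T) ⊆ nbrs G A \ s := by
        intro w hw
        rw [Finset.mem_sdiff]
        refine ⟨nbrs_mono Finset.sdiff_subset hw, ?_⟩
        intro hws
        rw [mem_nbrs] at hw
        obtain ⟨a, haI, hadj⟩ := hw
        rw [Finset.mem_sdiff] at haI
        apply haI.2
        simp only [hT, Finset.mem_biUnion]
        refine ⟨w, hws, ?_⟩
        rw [ht]
        simp only [if_pos (hs hws), Finset.mem_filter]
        exact ⟨haI.1, hadj⟩
      have hcardI : (A \ T).card = A.card - T.card := Finset.card_sdiff_of_subset hTA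
      have hc1 : (nbrs G (A \ T)).card ≤ (nbrs G A).card - s.card := by
        calc (nbrs G (A \ T)).card ≤ (nbrs G A \ s).card := Finset.card_le_card hNI
          _ = (nbrs G A).card - s.card := Finset.card_sdiff_of_subset hs
      have hTle : T.card ≤ A.card := Finset.card_le_card hTA
      have hsle : s.card ≤ (nbrs G A).card := Finset.card_le_card hs
      rw [diff, diff] at hle
      omega
    · obtain ⟨v, hvs, hvn⟩ := Finset.not_subset.mp hs
      have huniv : (univ : Finset V) ⊆ s.biUnion t := by
        intro w _
        simp only [Finset.mem_biUnion]
        refine ⟨v, hvs, ?_⟩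
        rw [ht]
        simp [if_neg hvn]
      calc s.card ≤ (univ : Finset V).card := Finset.card_le_card (Finset.subset_univ s)
        _ ≤ _ := Finset.card_le_card huniv
  obtain ⟨f, hfinj, hf⟩ := (Finset.all_card_le_biUnion_card_iff_exists_injective t).mp hall
  refine ⟨f, ?_, hfinj.injOn⟩
  intro v hv
  have hfv := hf v
  rw [ht] at hfv
  simp only [if_pos hv, Finset.mem_filter] at hfv
  exact ⟨hfv.1, hfv.2⟩

lemma diff_supermod (A B : Finset V) :
    diff G A + diff G B ≤ diff G (A ∪ B) + diff G (A ∩ B) := by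
  have h1 : (A ∪ B).card + (A ∩ B).card = A.card + B.card :=
    Finset.card_union_add_card_inter A B
  have h3 : nbrs G (A ∩ B) ⊆ nbrs G A ∩ nbrs G B :=
    Finset.subset_inter (nbrs_mono Finset.inter_subset_left)
      (nbrs_mono Finset.inter_subset_right)
  have h4 : (nbrs G (A ∪ B)).card + (nbrs G (A ∩ B)).card ≤
      (nbrs G A).card + (nbrs G B).card := by
    calc (nbrs G (A ∪ B)).card + (nbrs G (A ∩ B)).card
        ≤ (nbrs G A ∪ nbrs G B).card + (nbrs G A ∩ nbrs G B).card := by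
          rw [nbrs_union]
          exact Nat.add_le_add_left (Finset.card_le_card h3) _
      _ = _ := Finset.card_union_add_card_inter _ _
  simp only [diff]
  omega

lemma diff_union_le_diff_aug {A B : Finset V} (hA : IsCritIndep G A) :
    diff G (A ∪ B) ≤ diff G (A ∪ (B \ closedNbrs G A)) := by
  classical
  obtain ⟨f, hf, hfinj⟩ := crit_matching hA
  set B' := B \ closedNbrs G A with hB'
  set X := A ∪ B' with hX
  set D := B ∩ nbrs G A with hD
  have hXD : A ∪ B = X ∪ D := by
    ext v
    simp only [hX, hB', hD, closedNbrs, Finset.mem_union, Finset.mem_sdiff,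
      Finset.mem_inter]
    tauto
  have hdisj : Disjoint X D := by
    rw [Finset.disjoint_left]
    intro v hvX hvD
    rw [hD, Finset.mem_inter] at hvD
    rw [hX, Finset.mem_union] at hvX
    rcases hvX with h | h
    · exact indep_not_mem_nbrs hA.1 h hvD.2
    · rw [hB', Finset.mem_sdiff, closedNbrs] at h
      exact h.2 (Finset.mem_union_right _ hvD.2)
  have hcard : (A ∪ B).card = X.card + D.card := by
    rw [hXD]; exact Finset.card_union_of_disjoint hdisj
  have hAnX : ∀ a ∈ A, a ∉ nbrs G X := by
    intro a ha hmem
    rw [mem_nbrs] at hmem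
    obtain ⟨x, hx, hadj⟩ := hmem
    rw [hX, Finset.mem_union] at hx
    rcases hx with h | h
    · exact hA.1 a ha x h hadj
    · rw [hB', Finset.mem_sdiff, closedNbrs] at h
      exact h.2 (Finset.mem_union_right _ (mem_nbrs.mpr ⟨a, ha, hadj.symm⟩))
  have hDsub : D ⊆ nbrs G A := by rw [hD]; exact Finset.inter_subset_right
  have hinj : D.card ≤ (nbrs G D \ nbrs G X).card := by
    apply Finset.card_le_card_of_injOn f
    · intro d hd
      obtain ⟨h1, h2⟩ := hf d (hDsub hd)
      rw [Finset.mem_coe, Finset.mem_sdiff]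
      exact ⟨mem_nbrs.mpr ⟨d, hd, h2.symm⟩, hAnX _ h1⟩
    · exact hfinj.mono (Finset.coe_subset.mpr hDsub)
  have hcardN : (nbrs G (A ∪ B)).card = (nbrs G X).card + (nbrs G D \ nbrs G X).card := by
    rw [hXD, nbrs_union, ← Finset.union_sdiff_self_eq_union,
      Finset.card_union_of_disjoint Finset.disjoint_sdiff]
  rw [diff, diff, hcard, hcardN]
  push_cast
  omega

lemma indep_aug {A B : Finset V} (hA : IsIndep G A) (hB : IsIndep G B) :
    IsIndep G (A ∪ (B \ closedNbrs G A)) := by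
  intro a ha b hb hadj
  rw [Finset.mem_union] at ha hb
  rcases ha with ha | ha <;> rcases hb with hb | hb
  · exact hA a ha b hb hadj
  · rw [Finset.mem_sdiff, closedNbrs] at hb
    exact hb.2 (Finset.mem_union_right _ (mem_nbrs.mpr ⟨a, ha, hadj.symm⟩))
  · rw [Finset.mem_sdiff, closedNbrs] at ha
    exact ha.2 (Finset.mem_union_right _ (mem_nbrs.mpr ⟨b, hb, hadj⟩))
  · rw [Finset.mem_sdiff] at ha hb
    exact hB a ha.1 b hb.1 hadj

lemma crit_aug {A B : Finset V} (hA : IsCritIndep G A) (hB : IsCritIndep G B) :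
    IsCritIndep G (A ∪ (B \ closedNbrs G A)) := by
  have hind : IsIndep G (A ∪ (B \ closedNbrs G A)) := indep_aug hA.1 hB.1
  have hinter : IsIndep G (A ∩ B) := indep_subset Finset.inter_subset_left hA.1
  have h1 := diff_supermod (G := G) A B
  have h2 := hB.2 (A ∩ B) hinter
  have h3 := diff_union_le_diff_aug (B := B) hA
  have hAX : diff G A ≤ diff G (A ∪ (B \ closedNbrs G A)) := by linarith
  exact ⟨hind, fun I hI => le_trans (hA.2 I hI) hAX⟩

lemma card_B_inter_nbrs_le {A B : Finset V} (hA : IsCritIndep G A) :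
    (B ∩ nbrs G A).card ≤ (A ∩ nbrs G B).card := by
  obtain ⟨f, hf, hfinj⟩ := crit_matching hA
  apply Finset.card_le_card_of_injOn f
  · intro b hb
    rw [Finset.mem_coe, Finset.mem_inter] at hb ⊢
    obtain ⟨h1, h2⟩ := hf b hb.2
    exact ⟨h1, mem_nbrs.mpr ⟨b, hb.1, h2.symm⟩⟩
  · exact hfinj.mono (Finset.coe_subset.mpr Finset.inter_subset_right)

lemma card_aug_formula {A B : Finset V} (hA : IsIndep G A) :
    (A ∪ (B \ closedNbrs G A)).card + (A ∩ B).card + (B ∩ nbrs G A).card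
      = A.card + B.card := by
  have hdisj : Disjoint A (B \ closedNbrs G A) := by
    rw [Finset.disjoint_left]
    intro v hv hv2
    rw [Finset.mem_sdiff, closedNbrs] at hv2
    exact hv2.2 (Finset.mem_union_left _ hv)
  rw [Finset.card_union_of_disjoint hdisj]
  have h2 : B \ closedNbrs G A = B \ (B ∩ closedNbrs G A) := by
    ext v
    simp only [Finset.mem_sdiff, Finset.mem_inter]
    tauto
  have h3 : B ∩ closedNbrs G A = (A ∩ B) ∪ (B ∩ nbrs G A) := by
    rw [closedNbrs, Finset.inter_union_distrib_left, Finset.inter_comm]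
  have h4 : Disjoint (A ∩ B) (B ∩ nbrs G A) := by
    rw [Finset.disjoint_left]
    intro v hv hv2
    rw [Finset.mem_inter] at hv hv2
    exact indep_not_mem_nbrs hA hv.1 hv2.2
  have h5 : (B ∩ closedNbrs G A).card = (A ∩ B).card + (B ∩ nbrs G A).card := by
    rw [h3, Finset.card_union_of_disjoint h4]
  have h6 : (B \ closedNbrs G A).card = B.card - (B ∩ closedNbrs G A).card := by
    rw [h2, Finset.card_sdiff_of_subset Finset.inter_subset_left]
  have h7 : (B ∩ closedNbrs G A).card ≤ B.card :=
    Finset.card_le_card Finset.inter_subset_left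
  omega

lemma card_aug {A B : Finset V} (hA : IsCritIndep G A) (hB : IsCritIndep G B) :
    (A ∪ (B \ closedNbrs G A)).card = (B ∪ (A \ closedNbrs G B)).card := by
  have e1 : (B ∩ nbrs G A).card = (A ∩ nbrs G B).card :=
    le_antisymm (card_B_inter_nbrs_le hA) (card_B_inter_nbrs_le hB)
  have f1 := card_aug_formula (B := B) hA.1
  have f2 := card_aug_formula (B := A) hB.1
  rw [Finset.inter_comm B A] at f2
  omega

end Aux


theorem crit_indep_augmentation (G : SimpleGraph V) [Fintype V] [DecidableEq V]
    [DecidableRel G.Adj] (A B : Finset V) (hA : IsCritIndep G A) (hB : IsCritIndep G B) :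
    IsCritIndep G (A ∪ (B \ closedNbrs G A)) ∧ IsCritIndep G (B ∪ (A \ closedNbrs G B)) ∧
    (A ∪ (B \ closedNbrs G A)).card = (B ∪ (A \ closedNbrs G B)).card := by
  exact ⟨crit_aug hA hB, crit_aug hB hA, card_aug hA hB⟩
end

section
/- If A is a critical independent set of a graph G, then α(G) = α(G[N[A]]) + α(G − N[A]), where G − N[A] is the subgraph induced by V(G) − N[A]. -/
open Finset

variable {V : Type*}

namespace CrownPaper
variable {V : Type*}

section basic
variable {W : Type*} [Fintype W]

lemma indepSet_nonempty (G : SimpleGraph W) :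
    {n | ∃ S : Finset W, IsIndep G S ∧ S.card = n}.Nonempty :=
  ⟨0, ∅, fun a ha => absurd ha (by simp), rfl⟩

lemma indepSet_bddAbove (G : SimpleGraph W) :
    BddAbove {n | ∃ S : Finset W, IsIndep G S ∧ S.card = n} := by
  refine ⟨Fintype.card W, ?_⟩
  rintro n ⟨S, -, rfl⟩
  simpa using S.card_le_univ

lemma card_le_alpha (G : SimpleGraph W) {S : Finset W} (h : IsIndep G S) :
    S.card ≤ alpha G :=
  le_csSup (indepSet_bddAbove G) ⟨S, h, rfl⟩

lemma exists_alpha (G : SimpleGraph W) : ∃ S : Finset W, IsIndep G S ∧ S.card = alpha G :=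
  Nat.sSup_mem (indepSet_nonempty G) (indepSet_bddAbove G)

end basic

variable [Fintype V] [DecidableEq V]


lemma nbrs_mono (G : SimpleGraph V) [DecidableRel G.Adj] {A B : Finset V} (h : A ⊆ B) :
    nbrs G A ⊆ nbrs G B := by
  intro v hv
  simp only [nbrs, mem_filter, mem_univ, true_and] at hv ⊢
  obtain ⟨a, ha, hadj⟩ := hv
  exact ⟨a, h ha, hadj⟩

lemma exists_matching (G : SimpleGraph V) [DecidableRel G.Adj] {A : Finset V}
    (hA : IsCritIndep G A) :
    ∃ f : ↥(nbrs G A) → V, Function.Injective f ∧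
      ∀ v : ↥(nbrs G A), f v ∈ A ∧ G.Adj ↑v (f v) := by
  have hall : ∀ s : Finset ↥(nbrs G A),
      s.card ≤ (s.biUnion (fun v => A.filter (fun a => G.Adj ↑v a))).card := by
    intro s
    by_contra hlt
    push_neg at hlt
    set B := s.biUnion (fun v => A.filter (fun a => G.Adj ↑v a)) with hB
    set T := s.image (Subtype.val) with hT
    have hTcard : T.card = s.card := Finset.card_image_of_injective _ Subtype.val_injective
    have hTsub : T ⊆ nbrs G A := by
      intro v hv
      simp only [hT, mem_image] at hv
      obtain ⟨w, -, rfl⟩ := hv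
      exact w.2
    have hBA : B ⊆ A := by
      intro a ha
      simp only [hB, mem_biUnion, mem_filter] at ha
      obtain ⟨w, -, h1, -⟩ := ha
      exact h1
    have hA' : IsIndep G (A \ B) := fun a ha b hb =>
      hA.1 a (mem_sdiff.mp ha).1 b (mem_sdiff.mp hb).1
    have hsub : nbrs G (A \ B) ⊆ nbrs G A \ T := by
      intro v hv
      simp only [nbrs, mem_filter, mem_univ, true_and] at hv
      obtain ⟨a, ha, hadj⟩ := hv
      rw [mem_sdiff] at ha
      rw [mem_sdiff]
      constructor
      · simp only [nbrs, mem_filter, mem_univ, true_and]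
        exact ⟨a, ha.1, hadj⟩
      · intro hvT
        simp only [hT, mem_image] at hvT
        obtain ⟨w, hw, hwv⟩ := hvT
        exact ha.2 (by
          simp only [hB, mem_biUnion]
          exact ⟨w, hw, mem_filter.mpr ⟨ha.1, hwv ▸ hadj⟩⟩)
    have c1 : (A \ B).card = A.card - B.card := Finset.card_sdiff_of_subset hBA
    have c2 : (nbrs G (A \ B)).card ≤ (nbrs G A).card - T.card :=
      (Finset.card_le_card hsub).trans_eq (Finset.card_sdiff_of_subset hTsub)
    have c3 : T.card ≤ (nbrs G A).card := Finset.card_le_card hTsub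
    have c4 : B.card ≤ A.card := Finset.card_le_card hBA
    have := hA.2 (A \ B) hA'
    simp only [diff] at this
    omega
  obtain ⟨f, hinj, hf⟩ :=
    (Finset.all_card_le_biUnion_card_iff_exists_injective
      (fun v : ↥(nbrs G A) => A.filter (fun a => G.Adj ↑v a))).mp hall
  refine ⟨f, hinj, fun v => ?_⟩
  have := hf v
  rw [mem_filter] at this
  exact ⟨this.1, this.2⟩

lemma inter_nbrs_eq_empty (G : SimpleGraph V) [DecidableRel G.Adj] {A : Finset V}
    (hA : IsIndep G A) : A ∩ nbrs G A = ∅ := by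
  rw [Finset.eq_empty_iff_forall_notMem]
  intro v hv
  rw [mem_inter] at hv
  obtain ⟨hv1, hv2⟩ := hv
  simp only [nbrs, mem_filter, mem_univ, true_and] at hv2
  obtain ⟨a, ha, hadj⟩ := hv2
  exact hA v hv1 a ha hadj

lemma card_le_of_subset_closed (G : SimpleGraph V) [DecidableRel G.Adj] {A : Finset V}
    (hA : IsCritIndep G A) {I : Finset V} (hI : IsIndep G I)
    (hsub : I ⊆ closedNbrs G A) : I.card ≤ A.card := by
  obtain ⟨f, hinj, hf⟩ := exists_matching G hA
  classical
  set g : V → V := fun v => if h : v ∈ nbrs G A then f ⟨v, h⟩ else v with hg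
  have key : (I ∩ nbrs G A).card ≤ (A \ I).card := by
    apply Finset.card_le_card_of_injOn g
    · intro v hv
      rw [mem_coe, mem_inter] at hv
      have hvn := hv.2
      rw [mem_coe, mem_sdiff]
      have hgv : g v = f ⟨v, hvn⟩ := dif_pos hvn
      constructor
      · rw [hgv]; exact (hf ⟨v, hvn⟩).1
      · intro hgI
        exact hI v hv.1 (g v) hgI (hgv ▸ (hf ⟨v, hvn⟩).2)
    · intro v hv w hw hvw
      simp only [mem_coe, mem_inter] at hv hw
      have h1 : g v = f ⟨v, hv.2⟩ := dif_pos hv.2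
      have h2 : g w = f ⟨w, hw.2⟩ := dif_pos hw.2
      rw [h1, h2] at hvw
      exact congrArg Subtype.val (hinj hvw)
  have hdisj : I ∩ A ∩ (I ∩ nbrs G A) = ∅ := by
    rw [Finset.eq_empty_iff_forall_notMem]
    intro v hv
    simp only [mem_inter] at hv
    have : v ∈ A ∩ nbrs G A := mem_inter.mpr ⟨hv.1.2, hv.2.2⟩
    rw [inter_nbrs_eq_empty G hA.1] at this
    exact absurd this (notMem_empty v)
  have hIsplit : I = (I ∩ A) ∪ (I ∩ nbrs G A) := by
    rw [← Finset.inter_union_distrib_left]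
    exact (Finset.inter_eq_left.mpr hsub).symm
  have hcard : I.card = (I ∩ A).card + (I ∩ nbrs G A).card := by
    rw [hIsplit, Finset.card_union_of_disjoint (Finset.disjoint_iff_inter_eq_empty.mpr hdisj)]
    congr 1 <;> rw [← hIsplit]
  have hAI : (A \ I).card + (A ∩ I).card = A.card := Finset.card_sdiff_add_card_inter A I
  have hcomm : (A ∩ I).card = (I ∩ A).card := by rw [Finset.inter_comm]
  omega

end CrownPaper
namespace CrownPaper
variable [Fintype V] [DecidableEq V]

omit [Fintype V] [DecidableEq V] in
lemma indep_of_indep_induce (G : SimpleGraph V) (s : Set V) (J : Finset ↥s)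
    (hJ : IsIndep (G.induce s) J) : IsIndep G (J.map (Function.Embedding.subtype _)) := by
  intro a ha b hb hadj
  rw [Finset.mem_map] at ha hb
  obtain ⟨x, hx, rfl⟩ := ha
  obtain ⟨y, hy, rfl⟩ := hb
  exact hJ x hx y hy hadj

omit [Fintype V] [DecidableEq V] in
lemma exists_indep_induce (G : SimpleGraph V) (s : Set V) (I : Finset V)
    (hI : IsIndep G I) (h : ∀ x ∈ I, x ∈ s) :
    ∃ J : Finset ↥s, IsIndep (G.induce s) J ∧ J.card = I.card := by
  refine ⟨I.attach.map ⟨fun x => ⟨x.1, h _ x.2⟩, ?_⟩, ?_, ?_⟩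
  · intro x y hxy
    exact Subtype.ext (by simpa using hxy)
  · intro a ha b hb hadj
    rw [Finset.mem_map] at ha hb
    obtain ⟨x, -, hx⟩ := ha
    obtain ⟨y, -, hy⟩ := hb
    subst hx; subst hy
    exact hI x x.2 y y.2 hadj
  · simp

end CrownPaper


open CrownPaper

theorem alpha_split_of_crit_indep (G : SimpleGraph V) [Fintype V] [DecidableEq V]
    [DecidableRel G.Adj] (A : Finset V) (hA : IsCritIndep G A) :
    alpha G = alpha (G.induce (↑(closedNbrs G A) : Set V)) +
      alpha (G.induce (↑((closedNbrs G A)ᶜ) : Set V)) := by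
  set F := closedNbrs G A with hF
  -- Step 1 : alpha of G[N[A]] equals A.card
  have step1 : alpha (G.induce (↑F : Set V)) = A.card := by
    apply le_antisymm
    · obtain ⟨S, hSind, hScard⟩ := exists_alpha (G.induce (↑F : Set V))
      have hmap := indep_of_indep_induce G _ S hSind
      have hsub : S.map (Function.Embedding.subtype _) ⊆ F := by
        intro x hx
        rw [Finset.mem_map] at hx
        obtain ⟨y, -, rfl⟩ := hx
        exact y.2
      calc alpha (G.induce (↑F : Set V)) = S.card := hScard.symm
        _ = (S.map (Function.Embedding.subtype _)).card := (Finset.card_map _).symm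
        _ ≤ A.card := card_le_of_subset_closed G hA hmap hsub
    · obtain ⟨J, hJind, hJcard⟩ := exists_indep_induce G (↑F : Set V) A hA.1
        (fun x hx => Finset.mem_coe.mpr (Finset.mem_union_left _ hx))
      calc A.card = J.card := hJcard.symm
        _ ≤ alpha (G.induce (↑F : Set V)) := card_le_alpha _ hJind
  rw [step1]
  apply le_antisymm
  · -- alpha G ≤ A.card + alpha (G - N[A])
    obtain ⟨S, hSind, hScard⟩ := exists_alpha G
    have hsplit : S.card = (S ∩ F).card + (S \ F).card :=
      (Finset.card_inter_add_card_sdiff S F).symm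
    have h1 : (S ∩ F).card ≤ A.card :=
      card_le_of_subset_closed G hA
        (fun a ha b hb => hSind a (Finset.mem_inter.mp ha).1 b (Finset.mem_inter.mp hb).1)
        (Finset.inter_subset_right)
    have h2 : (S \ F).card ≤ alpha (G.induce (↑(Fᶜ) : Set V)) := by
      obtain ⟨J, hJind, hJcard⟩ := exists_indep_induce G (↑(Fᶜ) : Set V) (S \ F)
        (fun a ha b hb => hSind a (Finset.mem_sdiff.mp ha).1 b (Finset.mem_sdiff.mp hb).1)
        (fun x hx => Finset.mem_coe.mpr (Finset.mem_compl.mpr (Finset.mem_sdiff.mp hx).2))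
      exact hJcard ▸ card_le_alpha _ hJind
    omega
  · -- alpha G ≥ A.card + alpha (G - N[A])
    obtain ⟨T, hTind, hTcard⟩ := exists_alpha (G.induce (↑(Fᶜ) : Set V))
    set T' := T.map (Function.Embedding.subtype _) with hT'
    have hT'ind : IsIndep G T' := indep_of_indep_induce G _ T hTind
    have hT'sub : T' ⊆ Fᶜ := by
      intro x hx
      rw [hT', Finset.mem_map] at hx
      obtain ⟨y, -, rfl⟩ := hx
      exact Finset.mem_coe.mp y.2
    have hdisj : Disjoint A T' := by
      rw [Finset.disjoint_left]
      intro a haA haT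
      exact Finset.mem_compl.mp (hT'sub haT) (Finset.mem_union_left _ haA)
    have hunion : IsIndep G (A ∪ T') := by
      intro a ha b hb hadj
      rw [Finset.mem_union] at ha hb
      rcases ha with ha | ha <;> rcases hb with hb | hb
      · exact hA.1 a ha b hb hadj
      · refine Finset.mem_compl.mp (hT'sub hb) (Finset.mem_union_right _ ?_)
        simp only [nbrs, Finset.mem_filter, Finset.mem_univ, true_and]
        exact ⟨a, ha, hadj.symm⟩
      · refine Finset.mem_compl.mp (hT'sub ha) (Finset.mem_union_right _ ?_)
        simp only [nbrs, Finset.mem_filter, Finset.mem_univ, true_and]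
        exact ⟨b, hb, hadj⟩
      · exact hT'ind a ha b hb hadj
    have := card_le_alpha G hunion
    rw [Finset.card_union_of_disjoint hdisj, Finset.card_map, hTcard] at this
    exact this
end

section
/- If the family of critical independent sets of G equals the family of local maximum independent sets of G, then G is a König–Egerváry graph with a perfect matching. -/
open Finset

variable {V : Type*}

open CrownPaper

section Aux
variable [Fintype V] [DecidableEq V]

lemma mem_nbrs_iff (G : SimpleGraph V) [DecidableRel G.Adj] {A : Finset V} {v : V} :
    v ∈ nbrs G A ↔ ∃ a ∈ A, G.Adj v a := by
  simp [nbrs]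

lemma indep_subset_s17 (G : SimpleGraph V) {S T : Finset V} (hS : IsIndep G S) (hT : T ⊆ S) :
    IsIndep G T := fun a ha b hb => hS a (hT ha) b (hT hb)

/-- Hall condition from criticality bound. -/
lemma hall_cond (G : SimpleGraph V) [DecidableRel G.Adj] {S : Finset V}
    (hS : IsIndep G S) (hle : ∀ I : Finset V, IsIndep G I → diff G I ≤ 0)
    (hcard : (nbrs G S).card = S.card) {A : Finset V} (hA : A ⊆ nbrs G S) :
    A.card ≤ (S ∩ nbrs G A).card := by
  set I := S \ nbrs G A with hI
  have hIind : IsIndep G I := indep_subset_s17 G hS (sdiff_subset)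
  have hsub : nbrs G I ⊆ nbrs G S \ A := by
    intro v hv
    rw [mem_nbrs_iff] at hv
    obtain ⟨s, hs, hadj⟩ := hv
    have hsS : s ∈ S := (mem_sdiff.mp hs).1
    have hsnA : s ∉ nbrs G A := (mem_sdiff.mp hs).2
    refine mem_sdiff.mpr ⟨(mem_nbrs_iff G).mpr ⟨s, hsS, hadj⟩, ?_⟩
    intro hvA
    exact hsnA ((mem_nbrs_iff G).mpr ⟨v, hvA, hadj.symm⟩)
  have h1 : (nbrs G I).card ≤ (nbrs G S).card - A.card := by
    have := card_le_card hsub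
    rwa [card_sdiff_of_subset hA] at this
  have h2 : I.card + (S ∩ nbrs G A).card = S.card := by
    rw [hI]
    exact card_sdiff_add_card_inter S (nbrs G A)
  have h3 : (I.card : ℤ) ≤ (nbrs G I).card := by
    have := hle I hIind
    simp [diff] at this
    exact_mod_cast this
  have hAcard : A.card ≤ (nbrs G S).card := card_le_card hA
  omega
end Aux

set_option maxHeartbeats 1000000 in
theorem crit_eq_psi_implies_ke_pm (G : SimpleGraph V) [Fintype V] [DecidableEq V]
    [DecidableRel G.Adj] (h : ∀ S : Finset V, IsCritIndep G S ↔ IsLocalMaxIndep G S) :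
    IsKonigEgervary G ∧ HasPerfectMatching G := by
  classical
  -- empty set is local max indep, hence critical: all diffs ≤ 0
  have hempty : IsLocalMaxIndep G (∅ : Finset V) := by
    constructor
    · intro a ha; simp at ha
    · intro I _ hIsub
      have : closedNbrs G (∅ : Finset V) = ∅ := by
        simp [closedNbrs, nbrs]
      rw [this, subset_empty] at hIsub
      simp [hIsub]
  have hle : ∀ I : Finset V, IsIndep G I → diff G I ≤ 0 := by
    have := ((h ∅).mpr hempty).2
    intro I hI
    have h2 := this I hI
    simpa [diff, nbrs] using h2
  -- choose S : maximum independent set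
  obtain ⟨S, hSmem, hSmax⟩ := Finset.exists_max_image
    ((univ : Finset (Finset V)).filter (fun T => IsIndep G T)) Finset.card
    ⟨∅, by simp; intro a ha; simp at ha⟩
  have hSind : IsIndep G S := (mem_filter.mp hSmem).2
  have hSmax' : ∀ T : Finset V, IsIndep G T → T.card ≤ S.card := by
    intro T hT
    exact hSmax T (mem_filter.mpr ⟨mem_univ _, hT⟩)
  -- S is local max indep, hence critical, with diff = 0
  have hSlm : IsLocalMaxIndep G S := ⟨hSind, fun I hI _ => hSmax' I hI⟩
  have hScrit := (h S).mpr hSlm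
  have hcard : (nbrs G S).card = S.card := by
    have h1 : diff G S ≤ 0 := hle S hSind
    have h2 : (0 : ℤ) ≤ diff G S := by
      have := hScrit.2 ∅ (by intro a ha; simp at ha)
      simpa [diff, nbrs] using this
    have : diff G S = 0 := le_antisymm h1 h2
    simp [diff, sub_eq_zero] at this
    exact_mod_cast this.symm
  -- S ∩ nbrs G S = ∅ and nbrs G S = univ \ S
  have hdisj : ∀ v ∈ S, v ∉ nbrs G S := by
    intro v hv hvn
    obtain ⟨a, ha, hadj⟩ := (mem_nbrs_iff G).mp hvn
    exact hSind v hv a ha hadj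
  have hnbrs : nbrs G S = univ \ S := by
    apply Finset.Subset.antisymm
    · intro v hv
      refine mem_sdiff.mpr ⟨mem_univ _, ?_⟩
      intro hvS; exact hdisj v hvS hv
    · intro v hv
      have hvS : v ∉ S := (mem_sdiff.mp hv).2
      by_contra hvn
      -- insert v S is independent and bigger
      have hind : IsIndep G (insert v S) := by
        intro a ha b hb hadj
        rcases mem_insert.mp ha with rfl | haS
        · rcases mem_insert.mp hb with rfl | hbS
          · exact (G.loopless.irrefl _) hadj
          · exact hvn ((mem_nbrs_iff G).mpr ⟨b, hbS, hadj⟩)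
        · rcases mem_insert.mp hb with rfl | hbS
          · exact hvn ((mem_nbrs_iff G).mpr ⟨a, haS, hadj.symm⟩)
          · exact hSind a haS b hbS hadj
      have := hSmax' _ hind
      rw [card_insert_of_notMem hvS] at this
      omega
  have hcardV : Fintype.card V = 2 * S.card := by
    have h1 : (univ \ S).card = Fintype.card V - S.card := by
      rw [card_sdiff_of_subset (subset_univ S), card_univ]
    have h2 : S.card ≤ Fintype.card V := by
      simpa using card_le_card (subset_univ S)
    have := hcard
    rw [hnbrs, h1] at this
    omega
  -- Hall's theorem : matching from nbrs G S into S
  have hall : ∀ s : Finset {v // v ∈ nbrs G S},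
      s.card ≤ (s.biUnion (fun v => S.filter (fun w => G.Adj v.val w))).card := by
    intro s
    set A := s.image Subtype.val with hAdef
    have hA : A ⊆ nbrs G S := by
      intro v hv; obtain ⟨x, _, rfl⟩ := mem_image.mp hv; exact x.2
    have hcardA : A.card = s.card := card_image_of_injective _ Subtype.val_injective
    have hsub : S ∩ nbrs G A ⊆ s.biUnion (fun v => S.filter (fun w => G.Adj v.val w)) := by
      intro w hw
      obtain ⟨hwS, hwn⟩ := mem_inter.mp hw
      obtain ⟨a, haA, hadj⟩ := (mem_nbrs_iff G).mp hwn
      obtain ⟨x, hxs, rfl⟩ := mem_image.mp haA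
      exact mem_biUnion.mpr ⟨x, hxs, mem_filter.mpr ⟨hwS, hadj.symm⟩⟩
    calc s.card = A.card := hcardA.symm
      _ ≤ (S ∩ nbrs G A).card := hall_cond G hSind hle hcard hA
      _ ≤ _ := card_le_card hsub
  obtain ⟨f, hfinj, hft⟩ :=
    (Finset.all_card_le_biUnion_card_iff_existsInjective'
      (fun v : {v // v ∈ nbrs G S} => S.filter (fun w => G.Adj v.val w))).mp hall
  have hfS : ∀ x, f x ∈ S := fun x => (mem_filter.mp (hft x)).1
  have hfadj : ∀ x : {v // v ∈ nbrs G S}, G.Adj x.val (f x) :=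
    fun x => (mem_filter.mp (hft x)).2
  -- the matching
  set M : Finset (V × V) := (nbrs G S).attach.image (fun x => (x.val, f x)) with hMdef
  have hMmem : ∀ e ∈ M, ∃ x : {v // v ∈ nbrs G S}, e = (x.val, f x) := by
    intro e he
    obtain ⟨x, _, rfl⟩ := mem_image.mp he
    exact ⟨x, rfl⟩
  have hMmatch : IsMatching G M := by
    constructor
    · intro e he
      obtain ⟨x, rfl⟩ := hMmem e he
      exact hfadj x
    · intro e he e' he' hne
      obtain ⟨x, rfl⟩ := hMmem e he
      obtain ⟨y, rfl⟩ := hMmem e' he'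
      have hxy : x ≠ y := by rintro rfl; exact hne rfl
      refine ⟨fun hc => hxy (Subtype.ext hc), ?_, ?_, fun hc => hxy (hfinj hc)⟩
      · intro hc
        change x.val = f y at hc
        exact hdisj x.val (by rw [hc]; exact hfS y) x.2
      · intro hc
        change f x = y.val at hc
        exact hdisj y.val (by rw [← hc]; exact hfS x) y.2
  have hMcard : M.card = S.card := by
    rw [hMdef]
    rw [card_image_of_injective _ (fun a b hab => by
      exact Subtype.ext (congrArg Prod.fst hab))]
    rw [card_attach, hcard]
  -- image of f is all of S
  have himg : (nbrs G S).attach.image f = S := by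
    apply eq_of_subset_of_card_le
    · intro w hw; obtain ⟨x, _, rfl⟩ := mem_image.mp hw; exact hfS x
    · rw [card_image_of_injective _ hfinj, card_attach, hcard]
  have hPM : HasPerfectMatching G := by
    refine ⟨M, hMmatch, ?_⟩
    intro v
    by_cases hvS : v ∈ S
    · have hv2 : v ∈ (nbrs G S).attach.image f := by rw [himg]; exact hvS
      obtain ⟨x, hx, hfx⟩ := mem_image.mp hv2
      exact ⟨(x.val, f x), mem_image.mpr ⟨x, hx, rfl⟩, Or.inr hfx.symm⟩
    · have hvn : v ∈ nbrs G S := by rw [hnbrs]; exact mem_sdiff.mpr ⟨mem_univ _, hvS⟩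
      exact ⟨(v, f ⟨v, hvn⟩), mem_image.mpr ⟨⟨v, hvn⟩, mem_attach _ _, rfl⟩, Or.inl rfl⟩
  -- alpha = S.card
  have halpha : alpha G = S.card := by
    have hub : ∀ n ∈ {n | ∃ T : Finset V, IsIndep G T ∧ T.card = n}, n ≤ S.card := by
      rintro n ⟨T, hT, rfl⟩
      exact hSmax' T hT
    have hmem : S.card ∈ {n | ∃ T : Finset V, IsIndep G T ∧ T.card = n} := ⟨S, hSind, rfl⟩
    exact le_antisymm (csSup_le ⟨S.card, hmem⟩ hub) (le_csSup ⟨S.card, hub⟩ hmem)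
  -- matching bound: every matching has card ≤ S.card
  have hmub : ∀ M' : Finset (V × V), IsMatching G M' → M'.card ≤ S.card := by
    intro M' hM'
    have hinj : Set.InjOn (fun e : V × V => if e.1 ∈ S then e.2 else e.1) M' := by
      intro e he e' he' heq
      by_contra hne
      obtain ⟨h1, h2, h3, h4⟩ := hM'.2 e he e' he' hne
      simp only at heq
      split_ifs at heq <;> simp_all
    have hmaps : ∀ e ∈ M', (if e.1 ∈ S then e.2 else e.1) ∈ univ \ S := by
      intro e he
      refine mem_sdiff.mpr ⟨mem_univ _, ?_⟩
      split_ifs with h1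
      · intro h2; exact hSind e.1 h1 e.2 h2 (hM'.1 e he)
      · exact h1
    have := Finset.card_le_card_of_injOn _ hmaps hinj
    calc M'.card ≤ (univ \ S).card := this
      _ = S.card := by rw [← hnbrs, hcard]
  have hmu : mu G = S.card := by
    have hub : ∀ n ∈ {n | ∃ M' : Finset (V × V), IsMatching G M' ∧ M'.card = n},
        n ≤ S.card := by
      rintro n ⟨M', hM', rfl⟩
      exact hmub M' hM'
    have hmem : S.card ∈ {n | ∃ M' : Finset (V × V), IsMatching G M' ∧ M'.card = n} :=
      ⟨M, hMmatch, hMcard⟩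
    exact le_antisymm (csSup_le ⟨S.card, hmem⟩ hub) (le_csSup ⟨S.card, hub⟩ hmem)
  refine ⟨?_, hPM⟩
  unfold IsKonigEgervary
  rw [halpha, hmu, hcardV]
  ring
end
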